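/- Let μ/ν be a skew shape with associated Hessenberg function h : [n] → [n] such that μ_{h(i)} - ν_i + i - h(i) > 0 for all i ∈ [n] (i.e. the Jacobi-Trudi matrix H_{μ/ν} contains no entries equal to 1 at the lowest nonzero position of each column), and let θ = (N-k,1,...,1) be a hook partition of N = |μ/ν|. Then Γ^θ_{μ/ν} = C(n-1, k) · Γ_h, i.e. the immanant character is C(n-1,k) copies of the single Stanley-Stembridge character Γ_h. -/

import Mathlib

open Equiv

/-- `T i j` is the entry of a filling in row `i`, column `j` (0-based);
entries outside the diagram of `shape` are `0`.  Rows weakly increase,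
columns strictly increase. -/
def IsSSYT (shape : ℕ → ℕ) (T : ℕ → ℕ → ℕ) : Prop :=
  (∀ i j, j + 1 < shape i → T i j ≤ T i (j + 1)) ∧
  (∀ i j, j < shape (i + 1) → T i j < T (i + 1) j) ∧
  (∀ i j, shape i ≤ j → T i j = 0)

/-- The Kostka number: the number of semistandard Young tableaux of the given
shape in which the entry `m` appears exactly `c m` times. -/
noncomputable def kostka (shape : ℕ → ℕ) (c : ℕ → ℕ) : ℕ :=
  Set.ncard {T : ℕ → ℕ → ℕ | IsSSYT shape T ∧
    ∀ m : ℕ, {p : ℕ × ℕ | p.2 < shape p.1 ∧ T p.1 p.2 = m}.ncard = c m}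

open Classical in
/-- Kostka number for an integer content, with the convention that it is `0`
whenever the content has a negative entry. -/
noncomputable def kostkaZ (shape : ℕ → ℕ) (c : ℕ → ℤ) : ℕ :=
  if ∀ m, 0 ≤ c m then kostka shape (fun m => (c m).toNat) else 0

/-- The hook shape `(N - k, 1, ..., 1)` with `k` trailing rows of length 1. -/
def hookShape (N k : ℕ) : ℕ → ℕ :=
  fun i => if i = 0 then N - k else if i ≤ k then 1 else 0

/-- Extend a sequence indexed by `Fin n` to all of `ℕ` by zeros. -/
def extendSeq {n : ℕ} (a : Fin n → ℤ) : ℕ → ℤ :=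
  fun m => if h : m < n then a ⟨m, h⟩ else 0

/-- The staircase `δ = (n-1, n-2, ..., 1, 0)`. -/
def deltaSeq (n : ℕ) : Fin n → ℤ := fun i => (n : ℤ) - 1 - (i.val : ℤ)

/-- The sequence `μ + δ - w(ν + δ)`, where a permutation acts on sequences by
shuffling: `(w(a))_i = a_{w⁻¹(i)}`. -/
def hatSeq {n : ℕ} (μ ν : Fin n → ℕ) (w : Perm (Fin n)) : Fin n → ℤ :=
  fun i => ((μ i : ℤ) + deltaSeq n i) - ((ν (w⁻¹ i) : ℤ) + deltaSeq n (w⁻¹ i))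

/-- `h` is the Hessenberg function of the skew shape `μ/ν`:
`h j = max { i | μ i - ν j + j - i ≥ 0 }`. -/
def IsHessOf {n : ℕ} (μ ν : Fin n → ℕ) (h : Fin n → Fin n) : Prop :=
  ∀ j : Fin n, (ν j + ((h j : ℕ)) ≤ μ (h j) + (j : ℕ)) ∧
    ∀ i : Fin n, ν j + (i : ℕ) ≤ μ i + (j : ℕ) → i ≤ h j

/-- The indicator `ĥ(w)` of the condition `w(i) ≤ h(i)` for all `i`. -/
def hhat {n : ℕ} (h : Fin n → Fin n) (w : Perm (Fin n)) : ℕ :=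
  if ∀ i, w i ≤ h i then 1 else 0

/-- The modified Hessenberg function `h^J`: `h^J(i) = h(i) - 1` when `i ∈ J` and
`μ_{h(i)} - ν_i + i - h(i) = 0`, and `h^J(i) = h(i)` otherwise. -/
def hJfun {n : ℕ} (μ ν : Fin n → ℕ) (h : Fin n → Fin n) (J : Finset (Fin n)) :
    Fin n → Fin n :=
  fun i => if i ∈ J ∧ μ (h i) + (i : ℕ) = ν i + ((h i : ℕ)) then
      ⟨(h i : ℕ) - 1, Nat.lt_of_le_of_lt (Nat.sub_le _ _) (h i).isLt⟩
    else h i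

open Classical in
/-- The conjugacy class of `w` in the symmetric group, as a finset. -/
noncomputable def conjClass {n : ℕ} (w : Perm (Fin n)) : Finset (Perm (Fin n)) :=
  Finset.univ.filter (fun v => IsConj w v)

/-- The Stanley–Stembridge character
`Γ_h(w) = (n! / |C(w)|) · Σ_{w' ∈ C(w)} ĥ(w')`. -/
noncomputable def GammaH {n : ℕ} (h : Fin n → Fin n) (w : Perm (Fin n)) : ℚ :=
  ((n.factorial : ℚ) / ((conjClass w).card : ℚ)) * ∑ v ∈ conjClass w, (hhat h v : ℚ)

/-- The immanant character
`Γ^θ_{μ/ν}(w) = (n! / |C(w)|) · Σ_{w' ∈ C(w)} K_{θ, μ+δ-w'(ν+δ)}`. -/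
noncomputable def GammaTheta {n : ℕ} (shape : ℕ → ℕ) (μ ν : Fin n → ℕ)
    (w : Perm (Fin n)) : ℚ :=
  ((n.factorial : ℚ) / ((conjClass w).card : ℚ)) *
    ∑ v ∈ conjClass w, (kostkaZ shape (extendSeq (hatSeq μ ν v)) : ℚ)

namespace Stmt16Aux

open Finset


def IsSSYT0 (shape : ℕ → ℕ) (T : ℕ → ℕ → ℕ) : Prop :=
  (∀ i j, j + 1 < shape i → T i j ≤ T i (j + 1)) ∧
  (∀ i j, j < shape (i + 1) → T i j < T (i + 1) j) ∧
  (∀ i j, shape i ≤ j → T i j = 0)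

/-- prefix sums of a content -/
def P (c : ℕ → ℕ) (m : ℕ) : ℕ := ∑ t ∈ Finset.range m, c t

lemma P_mono (c : ℕ → ℕ) : Monotone (P c) := by
  intro a b hab
  exact Finset.sum_le_sum_of_subset (Finset.range_subset_range.2 hab)

lemma P_succ (c : ℕ → ℕ) (m : ℕ) : P c (m+1) = P c m + c m :=
  Finset.sum_range_succ c m

lemma P_stable (c : ℕ → ℕ) {n m : ℕ} (hsupp : ∀ t, n ≤ t → c t = 0)
    (h : n ≤ m) : P c m = P c n := by
  induction m with
  | zero => have : n = 0 := by omega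
            rw [this]
  | succ m ih =>
    rcases Nat.lt_or_ge n (m+1) with h1 | h1
    · have hnm : n ≤ m := by omega
      rw [P_succ, ih hnm, hsupp m hnm]
      omega
    · have : n = m + 1 := by omega
      rw [this]

lemma P_le (c : ℕ → ℕ) {n : ℕ} (hsupp : ∀ t, n ≤ t → c t = 0) (m : ℕ) :
    P c m ≤ P c n := by
  rcases le_or_gt m n with h | h
  · exact P_mono c h
  · rw [P_stable c hsupp h.le]

/-- the weakly increasing arrangement of the multiset with multiplicities `c` -/
noncomputable def arr (c : ℕ → ℕ) (j : ℕ) : ℕ := sInf {m | j < P c (m+1)}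

lemma mem_arrSet {c : ℕ → ℕ} {n j : ℕ} (hn : 0 < n) (hj : j < P c n) :
    n - 1 ∈ {m | j < P c (m+1)} := by
  simp only [Set.mem_setOf_eq]
  have h : n - 1 + 1 = n := by omega
  rw [h]
  exact hj

lemma arr_eq_iff {c : ℕ → ℕ} {n j : ℕ} (hn : 0 < n) (hj : j < P c n) (m : ℕ) :
    arr c j = m ↔ P c m ≤ j ∧ j < P c (m+1) := by
  have hne : {m | j < P c (m+1)}.Nonempty := ⟨n - 1, mem_arrSet hn hj⟩
  constructor
  · rintro rfl
    have hmem := Nat.sInf_mem hne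
    refine ⟨?_, hmem⟩
    by_contra hcon
    push_neg at hcon
    rcases Nat.eq_zero_or_pos (arr c j) with h0 | h0
    · rw [h0] at hcon; simp [P] at hcon
    · have hm : arr c j - 1 ∈ {m | j < P c (m+1)} := by
        simp only [Set.mem_setOf_eq]
        calc j < P c (arr c j) := hcon
          _ ≤ P c (arr c j - 1 + 1) := P_mono c (by omega)
      have := Nat.sInf_le hm
      unfold arr at *
      omega
  · rintro ⟨h1, h2⟩
    have hle : arr c j ≤ m := Nat.sInf_le h2
    have hmem := Nat.sInf_mem hne
    by_contra hcon
    have hlt : arr c j < m := lt_of_le_of_ne hle hcon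
    have h3 : P c (arr c j + 1) ≤ P c m := P_mono c (by omega)
    have : j < P c m := lt_of_lt_of_le hmem h3
    omega

lemma arr_lt {c : ℕ → ℕ} {n j : ℕ} (hn : 0 < n) (hj : j < P c n) :
    arr c j < n := by
  have := Nat.sInf_le (mem_arrSet hn hj)
  unfold arr
  omega

lemma arr_mono {c : ℕ → ℕ} {n j j' : ℕ} (hn : 0 < n) (hj' : j' < P c n)
    (hjj : j ≤ j') : arr c j ≤ arr c j' := by
  have hne' : {m | j' < P c (m+1)}.Nonempty := ⟨n - 1, mem_arrSet hn hj'⟩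
  have hmem := Nat.sInf_mem hne'
  exact Nat.sInf_le (lt_of_le_of_lt hjj hmem)

lemma arr_zero {c : ℕ → ℕ} (hc : 0 < c 0) : arr c 0 = 0 := by
  have h0 : (0 : ℕ) ∈ {m | 0 < P c (m+1)} := by
    simp only [Set.mem_setOf_eq, P, Finset.sum_range_one]
    exact hc
  exact Nat.le_zero.1 (Nat.sInf_le h0)

lemma arr_count {c : ℕ → ℕ} {n : ℕ} (hn : 0 < n)
    (hsupp : ∀ t, n ≤ t → c t = 0) (m : ℕ) :
    #((range (P c n)).filter (fun j => arr c j = m)) = c m := by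
  rcases Nat.lt_or_ge m n with hm | hm
  · have he : (range (P c n)).filter (fun j => arr c j = m) = Finset.Ico (P c m) (P c (m+1)) := by
      ext j
      simp only [mem_filter, mem_range, Finset.mem_Ico]
      constructor
      · rintro ⟨hj, hje⟩
        exact (arr_eq_iff hn hj m).1 hje
      · rintro ⟨h1, h2⟩
        have hj : j < P c n := lt_of_lt_of_le h2 (P_le c hsupp (m+1))
        exact ⟨hj, (arr_eq_iff hn hj m).2 ⟨h1, h2⟩⟩
    rw [he, Nat.card_Ico, P_succ]
    omega
  · rw [hsupp m hm]
    rw [Finset.card_eq_zero, Finset.filter_eq_empty_iff]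
    intro j hj
    simp only [mem_range] at hj
    have := arr_lt hn hj
    omega

/-- uniqueness: a weakly increasing function with multiplicities `c` equals `arr c` -/
lemma eq_arr_of_mono_count {c : ℕ → ℕ} {n : ℕ} (f : ℕ → ℕ) (hn : 0 < n)
    (hsupp : ∀ t, n ≤ t → c t = 0)
    (hmono : ∀ j, j + 1 < P c n → f j ≤ f (j+1))
    (hcount : ∀ m, #((range (P c n)).filter (fun j => f j = m)) = c m) :
    ∀ j < P c n, f j = arr c j := by
  have hmono' : ∀ j' j, j ≤ j' → j' < P c n → f j ≤ f j' := by
    intro j'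
    induction j' with
    | zero => intro j hjj _; have : j = 0 := by omega
              rw [this]
    | succ a ih =>
      intro j hjj ha
      rcases Nat.lt_or_ge j (a+1) with h1 | h1
      · have h2 : f j ≤ f a := ih j (by omega) (by omega)
        exact le_trans h2 (hmono a ha)
      · have : j = a + 1 := by omega
        rw [this]
  have hcard : ∀ m, #((range (P c n)).filter (fun j => f j < m)) = P c m := by
    intro m
    induction m with
    | zero => simp [P]
    | succ m ih =>
      have hsplit : (range (P c n)).filter (fun j => f j < m + 1)
          = ((range (P c n)).filter (fun j => f j < m)) ∪ ((range (P c n)).filter (fun j => f j = m)) := by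
        ext j; simp only [mem_filter, mem_union]
        constructor
        · rintro ⟨h1, h2⟩
          rcases Nat.lt_or_ge (f j) m with h3 | h3
          · exact Or.inl ⟨h1, h3⟩
          · exact Or.inr ⟨h1, by omega⟩
        · rintro (⟨h1, h2⟩ | ⟨h1, h2⟩) <;> exact ⟨h1, by omega⟩
      have hdisj : Disjoint ((range (P c n)).filter (fun j => f j < m))
          ((range (P c n)).filter (fun j => f j = m)) := by
        rw [Finset.disjoint_left]
        intro j h1 h2
        simp only [mem_filter] at h1 h2
        omega
      rw [hsplit, Finset.card_union_of_disjoint hdisj, ih, hcount, P_succ]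
  have hAset : ∀ m, (range (P c n)).filter (fun j => f j < m) = range (P c m) := by
    intro m
    have hsub : (range (P c n)).filter (fun j => f j < m) ⊆ range (P c m) := by
      intro j hj
      simp only [mem_filter, mem_range] at hj
      simp only [mem_range]
      have hrange : range (j+1) ⊆ (range (P c n)).filter (fun j => f j < m) := by
        intro j' hj'
        simp only [mem_range] at hj'
        simp only [mem_filter, mem_range]
        constructor
        · omega
        · exact lt_of_le_of_lt (hmono' j j' (by omega) hj.1) hj.2
      have := Finset.card_le_card hrange
      simp only [Finset.card_range] at this
      rw [hcard m] at this
      omega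
    exact Finset.eq_of_subset_of_card_le hsub
      (by rw [Finset.card_range, hcard])
  intro j hj
  have h1 : j < P c (f j + 1) := by
    have : j ∈ (range (P c n)).filter (fun t => f t < f j + 1) := by
      simp only [mem_filter, mem_range]; exact ⟨hj, by omega⟩
    rw [hAset (f j + 1)] at this
    simpa using this
  have h2 : P c (f j) ≤ j := by
    by_contra hcon
    push_neg at hcon
    have : j ∈ range (P c (f j)) := by simpa using hcon
    rw [← hAset (f j)] at this
    simp only [mem_filter] at this
    omega
  exact ((arr_eq_iff hn hj (f j)).2 ⟨h2, h1⟩).symm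

section Hook
variable {N k : ℕ}

/-- hookShape duplicated locally for convenience -/
def hShape (N k : ℕ) : ℕ → ℕ := fun i => if i = 0 then N - k else if i ≤ k then 1 else 0

lemma hShape_le (hk : k < N) (i : ℕ) : hShape N k i ≤ N - k := by
  unfold hShape
  split <;> [omega; split <;> omega]

lemma cell_finset (hk : k < N) (T : ℕ → ℕ → ℕ) (m : ℕ) :
    {p : ℕ × ℕ | p.2 < hShape N k p.1 ∧ T p.1 p.2 = m} =
    ↑(((range (k+1)) ×ˢ (range (N-k))).filter
        (fun p => p.2 < hShape N k p.1 ∧ T p.1 p.2 = m)) := by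
  ext p
  simp only [Set.mem_setOf_eq, Finset.coe_filter, Finset.mem_product, mem_range]
  constructor
  · rintro ⟨h1, h2⟩
    refine ⟨⟨?_, lt_of_lt_of_le h1 (hShape_le hk p.1)⟩, h1, h2⟩
    by_contra hcon
    have : hShape N k p.1 = 0 := by unfold hShape; split <;> [omega; split <;> omega]
    omega
  · rintro ⟨_, h1, h2⟩; exact ⟨h1, h2⟩

lemma hook_filter_split (hk : k < N) (T : ℕ → ℕ → ℕ) (m : ℕ) :
    ((range (k+1)) ×ˢ (range (N-k))).filter
        (fun p => p.2 < hShape N k p.1 ∧ T p.1 p.2 = m)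
    = (({0} : Finset ℕ) ×ˢ ((range (N-k)).filter (fun j => T 0 j = m))) ∪
      (((Finset.Icc 1 k).filter (fun i => T i 0 = m)) ×ˢ ({0} : Finset ℕ)) := by
  ext ⟨a, b⟩
  simp only [mem_filter, Finset.mem_product, mem_range, Finset.mem_union,
    Finset.mem_singleton, Finset.mem_Icc]
  constructor
  · rintro ⟨⟨ha, hb⟩, hcell, hval⟩
    rcases Nat.eq_zero_or_pos a with h0 | h0
    · subst h0; exact Or.inl ⟨rfl, hb, hval⟩
    · have hak : a ≤ k ∧ b < 1 := by
        by_contra hcon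
        have : hShape N k a = if a ≤ k then 1 else 0 := by unfold hShape; split <;> [omega; rfl]
        rw [this] at hcell
        split at hcell <;> omega
      have hb0 : b = 0 := by omega
      subst hb0
      exact Or.inr ⟨⟨⟨h0, hak.1⟩, hval⟩, rfl⟩
  · rintro (⟨ha, hb, hval⟩ | ⟨⟨⟨ha1, hak⟩, hval⟩, hb⟩)
    · subst ha
      refine ⟨⟨by omega, hb⟩, ?_, hval⟩
      unfold hShape; simp [hb]
    · subst hb
      refine ⟨⟨by omega, by omega⟩, ?_, hval⟩
      unfold hShape
      have : ¬ (a = 0) := by omega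
      simp [this, hak]

lemma hook_count (hk : k < N) (T : ℕ → ℕ → ℕ) (m : ℕ) :
    #(((range (k+1)) ×ˢ (range (N-k))).filter
        (fun p => p.2 < hShape N k p.1 ∧ T p.1 p.2 = m))
    = #((range (N-k)).filter (fun j => T 0 j = m))
      + #((Finset.Icc 1 k).filter (fun i => T i 0 = m)) := by
  rw [hook_filter_split hk T m, Finset.card_union_of_disjoint, Finset.card_product,
    Finset.card_product, Finset.card_singleton]
  · ring
  · rw [Finset.disjoint_left]
    rintro ⟨a, b⟩ h1 h2
    simp only [Finset.mem_product, Finset.mem_singleton, mem_filter, Finset.mem_Icc] at h1 h2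
    omega

end Hook

section Tab

def csub (c : ℕ → ℕ) (S : Finset ℕ) : ℕ → ℕ := fun m => c m - (if m ∈ S then 1 else 0)

noncomputable def tab (c : ℕ → ℕ) (Nk : ℕ) (S : Finset ℕ) : ℕ → ℕ → ℕ :=
  fun i j =>
    if i = 0 then (if j < Nk then arr (csub c S) j else 0)
    else if hij : j = 0 ∧ i - 1 < S.card then S.orderEmbOfFin rfl ⟨i-1, hij.2⟩ else 0

variable {c : ℕ → ℕ} {n N k : ℕ} {S : Finset ℕ}

structure Good (c : ℕ → ℕ) (n N k : ℕ) (S : Finset ℕ) : Prop where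
  hc : ∀ m, 0 < c m ↔ m < n
  hNc : P c n = N
  hk : k < N
  hSsub : S ⊆ Finset.Icc 1 (n-1)
  hScard : S.card = k

namespace Good

variable (G : Good c n N k S)
include G

lemma hn : 0 < n := by
  by_contra hcon
  have h0 : n = 0 := by omega
  have := G.hNc
  rw [h0] at this
  simp [P] at this
  have := G.hk
  omega

lemma mem_S {m : ℕ} (hm : m ∈ S) : 1 ≤ m ∧ m < n := by
  have h := G.hSsub hm
  simp only [Finset.mem_Icc] at h
  have := G.hn
  omega

lemma ind_le (m : ℕ) : (if m ∈ S then 1 else 0) ≤ c m := by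
  split
  · next hm => exact (G.hc m).2 (G.mem_S hm).2
  · omega

lemma csub_supp : ∀ t, n ≤ t → csub c S t = 0 := by
  intro t ht
  unfold csub
  have : c t = 0 := by
    have := (G.hc t).1
    omega
  omega

lemma P_csub : P (csub c S) n = N - k := by
  unfold P csub
  rw [Finset.sum_tsub_distrib _ (fun m _ => G.ind_le m)]
  have h1 : ∑ t ∈ range n, (if t ∈ S then 1 else 0) = S.card := by
    rw [Finset.sum_boole]
    simp only [Nat.cast_id]
    congr 1
    rw [Finset.filter_mem_eq_inter, Finset.inter_eq_right.2 ?_]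
    intro m hm
    simp only [mem_range]
    exact (G.mem_S hm).2
  rw [h1, G.hScard]
  have := G.hNc
  unfold P at this
  rw [this]

lemma tab_row0 {j : ℕ} (hj : j < N - k) : tab c (N-k) S 0 j = arr (csub c S) j := by
  simp [tab, hj]

lemma tab_leg {i : ℕ} (h1 : 1 ≤ i) (h2 : i ≤ k) :
    tab c (N-k) S i 0 = S.orderEmbOfFin rfl ⟨i-1, by rw [G.hScard]; omega⟩ := by
  have hi0 : ¬ i = 0 := by omega
  have hcond : (0 : ℕ) = 0 ∧ i - 1 < S.card := ⟨rfl, by rw [G.hScard]; omega⟩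
  unfold tab
  rw [if_neg hi0, dif_pos hcond]

lemma tab_isSSYT : IsSSYT0 (hShape N k) (tab c (N-k) S) := by
  have hNk : 0 < N - k := by have := G.hk; omega
  have hPc := G.P_csub
  refine ⟨?_, ?_, ?_⟩
  · intro i j hj
    unfold hShape at hj
    rcases Nat.eq_zero_or_pos i with h0 | h0
    · subst h0
      simp only [reduceIte] at hj
      rw [G.tab_row0 (by omega), G.tab_row0 hj]
      exact arr_mono G.hn (by rw [hPc]; exact hj) (by omega)
    · exfalso
      have : ¬ i = 0 := by omega
      rw [if_neg this] at hj
      split at hj <;> omega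
  · intro i j hj
    unfold hShape at hj
    have hi1 : ¬ (i + 1 = 0) := by omega
    rw [if_neg hi1] at hj
    have hik : i + 1 ≤ k ∧ j = 0 := by
      constructor
      · by_contra hcon; rw [if_neg hcon] at hj; omega
      · split at hj <;> omega
    obtain ⟨hik, rfl⟩ := hik
    rw [G.tab_leg (by omega) hik]
    rcases Nat.eq_zero_or_pos i with h0 | h0
    · subst h0
      rw [G.tab_row0 (by omega), arr_zero]
      · have := S.orderEmbOfFin_mem (rfl) ⟨0, by rw [G.hScard]; omega⟩
        have h1 := (G.mem_S this).1
        simpa using (by omega : 0 < (S.orderEmbOfFin rfl ⟨0, by rw [G.hScard]; omega⟩ : ℕ))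
      · unfold csub
        have h0S : 0 ∉ S := fun hm => by have := (G.mem_S hm).1; omega
        simp only [if_neg h0S]
        have := (G.hc 0).2 G.hn
        omega
    · rw [G.tab_leg (by omega) (by omega)]
      apply (S.orderEmbOfFin rfl).strictMono
      simp only [Fin.mk_lt_mk]
      omega
  · intro i j hj
    unfold hShape at hj
    unfold tab
    rcases Nat.eq_zero_or_pos i with h0 | h0
    · subst h0
      simp only [reduceIte] at hj ⊢
      rw [if_neg (by omega)]
    · have hi0 : ¬ i = 0 := by omega
      rw [if_neg hi0] at hj ⊢
      rw [dif_neg]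
      rintro ⟨rfl, hcard⟩
      rw [G.hScard] at hcard
      split at hj <;> omega

end Good

end Tab

section Content
variable {c : ℕ → ℕ} {n N k : ℕ} {S : Finset ℕ}

namespace Good
variable (G : Good c n N k S)
include G

lemma row0_count (m : ℕ) :
    #((range (N-k)).filter (fun j => tab c (N-k) S 0 j = m)) = csub c S m := by
  have h1 : (range (N-k)).filter (fun j => tab c (N-k) S 0 j = m)
      = (range (N-k)).filter (fun j => arr (csub c S) j = m) := by
    apply Finset.filter_congr
    intro j hj
    rw [G.tab_row0 (mem_range.1 hj)]
  rw [h1]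
  have h2 := arr_count (c := csub c S) G.hn G.csub_supp m
  rw [G.P_csub] at h2
  exact h2

lemma leg_count (m : ℕ) :
    #((Finset.Icc 1 k).filter (fun i => tab c (N-k) S i 0 = m))
      = if m ∈ S then 1 else 0 := by
  split
  · next hm =>
    have hrange : (m : ℕ) ∈ Set.range (S.orderEmbOfFin rfl) := by
      rw [Finset.range_orderEmbOfFin]
      exact hm
    obtain ⟨t, ht⟩ := hrange
    rw [Finset.card_eq_one]
    refine ⟨(t : ℕ) + 1, ?_⟩
    ext i
    simp only [mem_filter, Finset.mem_Icc, Finset.mem_singleton]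
    constructor
    · rintro ⟨⟨h1, h2⟩, hv⟩
      rw [G.tab_leg h1 h2] at hv
      have := (S.orderEmbOfFin rfl).injective (hv.trans ht.symm)
      have hval : i - 1 = (t : ℕ) := congrArg Fin.val this
      omega
    · rintro rfl
      have htk : (t : ℕ) < k := by have h := t.isLt; have h2 := G.hScard; omega
      refine ⟨⟨by omega, by omega⟩, ?_⟩
      rw [G.tab_leg (by omega) (by omega)]
      have : (⟨(t:ℕ) + 1 - 1, by simp⟩ : Fin S.card) = t := by
        apply Fin.ext; simp
      rw [this, ht]
  · next hm =>
    rw [Finset.card_eq_zero, Finset.filter_eq_empty_iff]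
    intro i hi
    simp only [Finset.mem_Icc] at hi
    intro hv
    rw [G.tab_leg hi.1 hi.2] at hv
    exact hm (hv ▸ S.orderEmbOfFin_mem rfl _)

lemma tab_content (m : ℕ) :
    #(((range (k+1)) ×ˢ (range (N-k))).filter
        (fun p => p.2 < hShape N k p.1 ∧ tab c (N-k) S p.1 p.2 = m)) = c m := by
  rw [hook_count G.hk, G.row0_count, G.leg_count]
  unfold csub
  have := G.ind_le m
  omega

lemma tab_mem_iff (m : ℕ) :
    m ∈ S ↔ ∃ i, 1 ≤ i ∧ i ≤ k ∧ tab c (N-k) S i 0 = m := by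
  constructor
  · intro hm
    have hrange : (m : ℕ) ∈ Set.range (S.orderEmbOfFin rfl) := by
      rw [Finset.range_orderEmbOfFin]; exact hm
    obtain ⟨t, ht⟩ := hrange
    have htk : (t : ℕ) < k := by have h := t.isLt; have h2 := G.hScard; omega
    refine ⟨(t : ℕ) + 1, by omega, by omega, ?_⟩
    rw [G.tab_leg (by omega) (by omega)]
    have : (⟨(t:ℕ) + 1 - 1, by simp⟩ : Fin S.card) = t := by
      apply Fin.ext; simp
    rw [this, ht]
  · rintro ⟨i, h1, h2, hv⟩
    rw [G.tab_leg h1 h2] at hv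
    exact hv ▸ S.orderEmbOfFin_mem rfl _

end Good
end Content

section Surj
variable {c : ℕ → ℕ} {n N k : ℕ}

lemma exists_S (hc : ∀ m, 0 < c m ↔ m < n) (hNc : P c n = N) (hk : k < N)
    (T : ℕ → ℕ → ℕ) (hT : IsSSYT0 (hShape N k) T)
    (hcontent : ∀ m, #(((range (k+1)) ×ˢ (range (N-k))).filter
        (fun p => p.2 < hShape N k p.1 ∧ T p.1 p.2 = m)) = c m) :
    ∃ S : Finset ℕ, Good c n N k S ∧ T = tab c (N-k) S := by
  obtain ⟨hrow, hcol, hzero⟩ := hT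
  have hn : 0 < n := by
    by_contra hcon
    have h0 : n = 0 := by omega
    rw [h0] at hNc
    simp [P] at hNc
    omega
  have hNk : 0 < N - k := by omega
  -- all entries on cells are < n
  have hlt_n : ∀ i j, j < hShape N k i → T i j < n := by
    intro i j hcell
    by_contra hcon
    push_neg at hcon
    have hc0 : c (T i j) = 0 := by have := (hc (T i j)).1; omega
    have hmem : (i, j) ∈ ((range (k+1)) ×ˢ (range (N-k))).filter
        (fun p => p.2 < hShape N k p.1 ∧ T p.1 p.2 = T i j) := by
      simp only [mem_filter, Finset.mem_product, mem_range]
      refine ⟨⟨?_, lt_of_lt_of_le hcell (hShape_le hk i)⟩, hcell, by trivial⟩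
      by_contra hik
      have : hShape N k i = 0 := by unfold hShape; split <;> [omega; split <;> omega]
      omega
    have := hcontent (T i j)
    rw [hc0, Finset.card_eq_zero] at this
    rw [this] at hmem
    exact absurd hmem (Finset.notMem_empty _)
  -- strict chain in the first column
  have hchain : ∀ i', i' ≤ k → ∀ i < i', T i 0 < T i' 0 := by
    intro i'
    induction i' with
    | zero => intro _ i hi; omega
    | succ a ih =>
      intro ha i hi
      have hstep : T a 0 < T (a+1) 0 := by
        apply hcol a 0
        unfold hShape
        rw [if_neg (by omega), if_pos ha]
        omega
      rcases Nat.lt_or_ge i a with h1 | h1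
      · exact lt_trans (ih (by omega) i h1) hstep
      · have : i = a := by omega
        rw [this]; exact hstep
  set S : Finset ℕ := Finset.image (fun i => T i 0) (Finset.Icc 1 k) with hS
  have hinj : Set.InjOn (fun i => T i 0) ↑(Finset.Icc 1 k) := by
    intro a ha b hb hab
    simp only [Finset.coe_Icc, Set.mem_Icc] at ha hb
    rcases lt_trichotomy a b with h | h | h
    · exact absurd hab (ne_of_lt (hchain b hb.2 a h))
    · exact h
    · exact absurd hab.symm (ne_of_lt (hchain a ha.2 b h))
  have hScard : S.card = k := by
    rw [hS, Finset.card_image_of_injOn hinj, Nat.card_Icc]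
    omega
  have hSsub : S ⊆ Finset.Icc 1 (n-1) := by
    intro m hm
    rw [hS, Finset.mem_image] at hm
    obtain ⟨i, hi, rfl⟩ := hm
    simp only [Finset.mem_Icc] at hi
    have h1 : T 0 0 < T i 0 := hchain i hi.2 0 (by omega)
    have h2 : T i 0 < n := by
      apply hlt_n
      unfold hShape
      rw [if_neg (by omega), if_pos hi.2]
      omega
    simp only [Finset.mem_Icc]
    omega
  have G : Good c n N k S := ⟨hc, hNc, hk, hSsub, hScard⟩
  refine ⟨S, G, ?_⟩
  -- the leg of T equals orderEmbOfFin of S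
  have hfe : (fun t : Fin S.card => T ((t : ℕ) + 1) 0) = ⇑(S.orderEmbOfFin rfl) := by
    apply Finset.orderEmbOfFin_unique
    · intro t
      show T ((t : ℕ) + 1) 0 ∈ Finset.image (fun i => T i 0) (Finset.Icc 1 k)
      apply Finset.mem_image_of_mem
      simp only [Finset.mem_Icc]
      have := t.isLt
      have h2 := hScard
      omega
    · intro t t' htt
      exact hchain ((t' : ℕ) + 1) (by have := t'.isLt; omega) ((t : ℕ) + 1)
        (by exact_mod_cast Nat.add_lt_add_right htt 1)
  -- leg count for T
  have hlegcount : ∀ m, #((Finset.Icc 1 k).filter (fun i => T i 0 = m))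
      = if m ∈ S then 1 else 0 := by
    intro m
    split
    · next hm =>
      rw [hS, Finset.mem_image] at hm
      obtain ⟨i0, hi0, hv0⟩ := hm
      rw [Finset.card_eq_one]
      refine ⟨i0, ?_⟩
      ext i
      simp only [mem_filter, Finset.mem_singleton]
      constructor
      · rintro ⟨hi, hv⟩
        exact hinj (by exact_mod_cast hi) (by exact_mod_cast hi0) (hv.trans hv0.symm)
      · rintro rfl
        exact ⟨hi0, hv0⟩
    · next hm =>
      rw [Finset.card_eq_zero, Finset.filter_eq_empty_iff]
      intro i hi hv
      exact hm (by rw [hS, Finset.mem_image]; exact ⟨i, hi, hv⟩)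
  -- row 0 count for T
  have hrowcount : ∀ m, #((range (N-k)).filter (fun j => T 0 j = m)) = csub c S m := by
    intro m
    have h1 := hcontent m
    rw [hook_count hk T m, hlegcount m] at h1
    unfold csub
    have := G.ind_le m
    omega
  -- row 0 equals arr
  have hrow0 : ∀ j < N - k, T 0 j = arr (csub c S) j := by
    have := eq_arr_of_mono_count (c := csub c S) (n := n) (T 0) hn G.csub_supp ?_ ?_
    · rw [G.P_csub] at this; exact this
    · rw [G.P_csub]
      intro j hj
      apply hrow 0 j
      unfold hShape
      rw [if_pos rfl]
      exact hj
    · rw [G.P_csub]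
      exact hrowcount
  funext i j
  rcases Nat.eq_zero_or_pos i with h0 | h0
  · subst h0
    rcases Nat.lt_or_ge j (N - k) with hj | hj
    · rw [G.tab_row0 hj]
      exact hrow0 j hj
    · have h1 : T 0 j = 0 := by
        apply hzero 0 j
        unfold hShape
        rw [if_pos rfl]
        exact hj
      have h2 : tab c (N-k) S 0 j = 0 := by
        unfold tab
        rw [if_pos rfl, if_neg (by omega)]
      rw [h1, h2]
  · have hi0 : ¬ i = 0 := by omega
    by_cases hcase : j = 0 ∧ i - 1 < S.card
    · obtain ⟨rfl, hcard⟩ := hcase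
      have hik : i ≤ k := by have := G.hScard; omega
      rw [G.tab_leg (by omega) hik]
      have := congrFun hfe ⟨i - 1, hcard⟩
      simp only at this
      rw [← this]
      congr 1
      omega
    · have h2 : tab c (N-k) S i j = 0 := by
        unfold tab
        rw [if_neg hi0, dif_neg hcase]
      rw [h2]
      apply hzero i j
      unfold hShape
      rw [if_neg hi0]
      rcases Nat.eq_zero_or_pos j with hj0 | hj0
      · subst hj0
        have : ¬ i ≤ k := by
          intro hik
          exact hcase ⟨rfl, by have := G.hScard; omega⟩
        rw [if_neg this]
      · split <;> omega

end Surj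


section Main

theorem kostka_hook {n N k : ℕ} {c : ℕ → ℕ}
    (hc : ∀ m, 0 < c m ↔ m < n) (hNc : P c n = N) (hk : k < N) :
    kostka (hookShape N k) c = (n-1).choose k := by
  classical
  have hshape : hookShape N k = hShape N k := rfl
  set 𝒮 : Finset (Finset ℕ) := (Finset.Icc 1 (n-1)).powersetCard k with h𝒮
  have hmem𝒮 : ∀ S : Finset ℕ, S ∈ 𝒮 ↔ Good c n N k S := by
    intro S
    rw [h𝒮, Finset.mem_powersetCard]
    constructor
    · rintro ⟨h1, h2⟩; exact ⟨hc, hNc, hk, h1, h2⟩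
    · rintro ⟨_, _, _, h1, h2⟩; exact ⟨h1, h2⟩
  have hset : {T : ℕ → ℕ → ℕ | IsSSYT (hookShape N k) T ∧
      ∀ m : ℕ, {p : ℕ × ℕ | p.2 < hookShape N k p.1 ∧ T p.1 p.2 = m}.ncard = c m}
      = (fun S => tab c (N-k) S) '' ↑𝒮 := by
    ext T
    simp only [Set.mem_setOf_eq, Set.mem_image, Finset.mem_coe]
    constructor
    · rintro ⟨hssyt, hcont⟩
      have hcont' : ∀ m, #(((range (k+1)) ×ˢ (range (N-k))).filter
          (fun p => p.2 < hShape N k p.1 ∧ T p.1 p.2 = m)) = c m := by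
        intro m
        rw [← Set.ncard_coe_finset, ← cell_finset hk T m]
        rw [hshape] at hcont
        exact hcont m
      obtain ⟨S, G, hTS⟩ := exists_S hc hNc hk T (hshape ▸ hssyt) hcont'
      exact ⟨S, (hmem𝒮 S).2 G, hTS.symm⟩
    · rintro ⟨S, hS, rfl⟩
      have G : Good c n N k S := (hmem𝒮 S).1 hS
      constructor
      · exact hshape ▸ G.tab_isSSYT
      · intro m
        rw [hshape, cell_finset hk _ m, Set.ncard_coe_finset]
        exact G.tab_content m
  have hinj : Set.InjOn (fun S => tab c (N-k) S) ↑𝒮 := by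
    intro S hS S' hS' heq
    have G : Good c n N k S := (hmem𝒮 S).1 hS
    have G' : Good c n N k S' := (hmem𝒮 S').1 hS'
    ext m
    rw [G.tab_mem_iff m, G'.tab_mem_iff m]
    simp only at heq
    rw [heq]
  rw [kostka, hset, Set.ncard_image_of_injOn hinj, Set.ncard_coe_finset, h𝒮,
    Finset.card_powersetCard, Nat.card_Icc]
  congr 1

theorem perm_term {n N k : ℕ} (μ ν : Fin n → ℕ) (hμ : Antitone μ)
    (hlt : ∀ i, ν i < μ i) (hN : N = ∑ i : Fin n, (μ i - ν i)) (hk : k < N)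
    (h : Fin n → Fin n) (hh : IsHessOf μ ν h)
    (hpos : ∀ i : Fin n, ν i + ((h i : ℕ)) < μ (h i) + (i : ℕ))
    (v : Equiv.Perm (Fin n)) :
    kostkaZ (hookShape N k) (extendSeq (hatSeq μ ν v)) = (n-1).choose k * hhat h v := by
  classical
  set cZ : ℕ → ℤ := extendSeq (hatSeq μ ν v) with hcZ
  by_cases hcond : ∀ i, v i ≤ h i
  · -- all entries positive
    have hposall : ∀ i : Fin n, 0 < hatSeq μ ν v i := by
      intro i0
      set j : Fin n := v⁻¹ i0 with hj
      have hvj : v j = i0 := by rw [hj]; exact v.apply_symm_apply i0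
      have h1 : v j ≤ h j := hcond j
      have h1' : (i0 : ℕ) ≤ ((h j : ℕ)) := by
        rw [← hvj]; exact_mod_cast h1
      have h2 : μ ((h j)) ≤ μ i0 := hμ (by rw [← hvj]; exact h1)
      have h3 : ν j + (i0 : ℕ) < μ i0 + (j : ℕ) :=
        calc ν j + (i0 : ℕ) ≤ ν j + ((h j : ℕ)) := by omega
          _ < μ (h j) + (j : ℕ) := hpos j
          _ ≤ μ i0 + (j : ℕ) := by omega
      unfold hatSeq deltaSeq
      rw [← hj]
      have := (Nat.cast_lt (α := ℤ)).2 h3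
      push_cast at this ⊢
      linarith
    have hnonneg : ∀ m, 0 ≤ cZ m := by
      intro m
      rw [hcZ]
      unfold extendSeq
      split
      · next hm => exact le_of_lt (hposall _)
      · exact le_refl 0
    rw [kostkaZ, if_pos hnonneg]
    set c' : ℕ → ℕ := fun m => (cZ m).toNat with hc'
    have hc : ∀ m, 0 < c' m ↔ m < n := by
      intro m
      constructor
      · intro hm
        by_contra hcon
        have hz : cZ m = 0 := by
          rw [hcZ]; unfold extendSeq; rw [dif_neg hcon]
        have : (0:ℕ) < (cZ m).toNat := hm
        rw [hz] at this
        omega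
      · intro hm
        have hv : cZ m = hatSeq μ ν v ⟨m, hm⟩ := by
          rw [hcZ]; unfold extendSeq; rw [dif_pos hm]
        show 0 < (cZ m).toNat
        rw [hv]
        have := hposall ⟨m, hm⟩
        omega
    have hNc : P c' n = N := by
      have hcast : ((P c' n : ℤ)) = (N : ℤ) := by
        unfold P
        push_cast
        have h1 : ∀ m ∈ range n, ((c' m : ℤ)) = cZ m := by
          intro m hm
          rw [hc', Int.toNat_of_nonneg (hnonneg m)]
        rw [Finset.sum_congr rfl h1]
        have h2 : ∑ m ∈ range n, cZ m = ∑ i : Fin n, hatSeq μ ν v i := by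
          rw [← Fin.sum_univ_eq_sum_range (fun m => cZ m) n]
          apply Finset.sum_congr rfl
          intro i _
          rw [hcZ]
          unfold extendSeq
          rw [dif_pos i.isLt]
        rw [h2]
        have h3 : ∑ i : Fin n, hatSeq μ ν v i
            = ∑ i : Fin n, ((μ i : ℤ) + deltaSeq n i)
              - ∑ i : Fin n, ((ν i : ℤ) + deltaSeq n i) := by
          simp only [hatSeq]
          rw [Finset.sum_sub_distrib]
          congr 1
          exact Equiv.sum_comp (v⁻¹) (fun i => ((ν i : ℤ) + deltaSeq n i))
        rw [h3, hN, Nat.cast_sum,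
          Finset.sum_congr rfl (fun i _ => Nat.cast_sub (le_of_lt (hlt i)))]
        rw [Finset.sum_add_distrib, Finset.sum_add_distrib, Finset.sum_sub_distrib]
        ring
      exact_mod_cast hcast
    rw [kostka_hook hc hNc hk]
    unfold hhat
    rw [if_pos hcond, mul_one]
  · -- some entry negative
    push_neg at hcond
    obtain ⟨j, hjv⟩ := hcond
    have hneg : ¬ ∀ m, 0 ≤ cZ m := by
      intro hall
      have hvn := (v j).isLt
      have hvalue : cZ ((v j : ℕ)) = hatSeq μ ν v (v j) := by
        rw [hcZ]
        unfold extendSeq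
        rw [dif_pos hvn]
      have hmax := (hh j).2 (v j)
      have hstrict : μ (v j) + (j : ℕ) < ν j + ((v j : ℕ)) := by
        by_contra hcon
        push_neg at hcon
        exact absurd (hmax hcon) (not_le.2 hjv)
      have hhat_neg : hatSeq μ ν v (v j) < 0 := by
        unfold hatSeq deltaSeq
        rw [show v⁻¹ (v j) = j from v.symm_apply_apply j]
        have := (Nat.cast_lt (α := ℤ)).2 hstrict
        push_cast at this ⊢
        linarith
      have := hall ((v j : ℕ))
      rw [hvalue] at this
      omega
    rw [kostkaZ, if_neg hneg]
    unfold hhat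
    rw [if_neg (by push_neg; exact ⟨j, hjv⟩), mul_zero]


end Main

end Stmt16Aux

/-- if the Jacobi–Trudi matrix of `μ/ν` has no `1` at the
lowest nonzero position of each column (`μ_{h(i)} - ν_i + i - h(i) > 0` for all
`i`), then for the hook `θ = (N-k,1,...,1)` we have
`Γ^θ_{μ/ν} = C(n-1, k) · Γ_h`. -/
theorem stmt16 {n N k : ℕ} (μ ν : Fin n → ℕ) (hμ : Antitone μ) (hν : Antitone ν)
    (hlt : ∀ i, ν i < μ i) (hN : N = ∑ i : Fin n, (μ i - ν i)) (hk : k < N)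
    (h : Fin n → Fin n) (hh : IsHessOf μ ν h)
    (hpos : ∀ i : Fin n, ν i + ((h i : ℕ)) < μ (h i) + (i : ℕ))
    (w : Perm (Fin n)) :
    GammaTheta (hookShape N k) μ ν w = ((n - 1).choose k : ℚ) * GammaH h w := by
  unfold GammaTheta GammaH
  have hper : ∀ v ∈ conjClass w,
      (kostkaZ (hookShape N k) (extendSeq (hatSeq μ ν v)) : ℚ)
        = ((n-1).choose k : ℚ) * (hhat h v : ℚ) := by
    intro v _
    have := Stmt16Aux.perm_term μ ν hμ hlt hN hk h hh hpos v
    exact_mod_cast congrArg (fun t : ℕ => (t : ℚ)) this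
  rw [Finset.sum_congr rfl hper, ← Finset.mul_sum]
  ring
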